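/- (Convergence of the IMEX scheme, case ζ > γ) Let n_ξ ≥ 2, n_x ≥ 1 be integers, γ, ν, τ, h_ξ > 0 reals, A = (1+γτ) I_{n_ξ} − (τν/h_ξ²) Δ with Δ the n_ξ×n_ξ Neumann finite-difference Laplacian matrix. Let N : ℝ^{n_ξ×n_x} → ℝ^{n_ξ×n_x} satisfy |N(V) − N(U)|_∞ ≤ ζ |V − U|_∞ for all V, U, with constant ζ ≥ 0. Let (V^n) and (V_*^n) be sequences in ℝ^{n_ξ×n_x} with V^0 = V_*^0, satisfying A V^n = V^{n−1} + τ N(V^{n−1}) + τ G^{n−1} and A V_*^n = V_*^{n−1} + τ N(V_*^{n−1}) + τ G^{n−1} + τ R^{n−1} for all n ≥ 1, where |R^{n−1}|_∞ ≤ ω for a constant ω ≥ 0. If ζ > γ, then for every n with 1 ≤ n ≤ n_t one has |V^n − V_*^n|_∞ ≤ (ω/(ζ − γ)) exp( (ζ − γ) T / (1 + γτ) ), where T = n_t τ. -/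

import Mathlib

open Real Finset

/-- The `n × n` second-order centred finite-difference Laplacian incorporating
Neumann boundary conditions. -/
def neumannLaplacian (n : ℕ) : Matrix (Fin n) (Fin n) ℝ :=
  Matrix.of fun i j =>
    if (i : ℕ) = (j : ℕ) then -2
    else if (i : ℕ) = 0 ∧ (j : ℕ) = 1 then 2
    else if (i : ℕ) = n - 1 ∧ (j : ℕ) = n - 2 then 2
    else if (j : ℕ) + 1 = (i : ℕ) ∨ (i : ℕ) + 1 = (j : ℕ) then 1
    else 0

/-- The matrix norm induced by the vector `∞`-norm:
`|M|_∞ = max_i Σ_j |M i j|`. -/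
noncomputable def matInfNorm {m n : ℕ} (M : Matrix (Fin m) (Fin n) ℝ) : ℝ :=
  ⨆ i, ∑ j, |M i j|

set_option linter.unusedSectionVars false

section norms
variable {m n : ℕ} [Nonempty (Fin m)]

lemma row_le_matInfNorm (M : Matrix (Fin m) (Fin n) ℝ) (i : Fin m) :
    ∑ j, |M i j| ≤ matInfNorm M := by
  unfold matInfNorm
  exact le_ciSup (Set.Finite.bddAbove (Set.finite_range fun i => ∑ j, |M i j|)) i

lemma matInfNorm_le {M : Matrix (Fin m) (Fin n) ℝ} {c : ℝ}
    (h : ∀ i, ∑ j, |M i j| ≤ c) : matInfNorm M ≤ c := ciSup_le h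

lemma matInfNorm_nonneg (M : Matrix (Fin m) (Fin n) ℝ) : 0 ≤ matInfNorm M := by
  obtain ⟨i⟩ := ‹Nonempty (Fin m)›
  exact le_trans (Finset.sum_nonneg fun j _ => abs_nonneg _) (row_le_matInfNorm M i)

lemma matInfNorm_zero : matInfNorm (0 : Matrix (Fin m) (Fin n) ℝ) = 0 := by
  unfold matInfNorm
  simp [ciSup_const]

lemma matInfNorm_add_le (M N : Matrix (Fin m) (Fin n) ℝ) :
    matInfNorm (M + N) ≤ matInfNorm M + matInfNorm N := by
  apply matInfNorm_le
  intro i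
  calc ∑ j, |(M + N) i j| ≤ ∑ j, (|M i j| + |N i j|) :=
        Finset.sum_le_sum fun j _ => by simpa [Matrix.add_apply] using abs_add_le (M i j) (N i j)
    _ = (∑ j, |M i j|) + ∑ j, |N i j| := Finset.sum_add_distrib
    _ ≤ _ := add_le_add (row_le_matInfNorm M i) (row_le_matInfNorm N i)

lemma matInfNorm_neg (M : Matrix (Fin m) (Fin n) ℝ) : matInfNorm (-M) = matInfNorm M := by
  unfold matInfNorm
  simp [Matrix.neg_apply, abs_neg]

lemma matInfNorm_sub_le (M N : Matrix (Fin m) (Fin n) ℝ) :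
    matInfNorm (M - N) ≤ matInfNorm M + matInfNorm N := by
  rw [sub_eq_add_neg]
  simpa [matInfNorm_neg] using matInfNorm_add_le M (-N)

lemma matInfNorm_smul_le (a : ℝ) (M : Matrix (Fin m) (Fin n) ℝ) :
    matInfNorm (a • M) ≤ |a| * matInfNorm M := by
  apply matInfNorm_le
  intro i
  calc ∑ j, |(a • M) i j| = |a| * ∑ j, |M i j| := by
        rw [Finset.mul_sum]; exact Finset.sum_congr rfl fun j _ => by
          simp [Matrix.smul_apply, abs_mul]
    _ ≤ |a| * matInfNorm M :=
        mul_le_mul_of_nonneg_left (row_le_matInfNorm M i) (abs_nonneg a)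

end norms

section laplacian
variable {n : ℕ}

lemma neumann_diag (i : Fin n) : neumannLaplacian n i i = -2 := by
  simp [neumannLaplacian]

lemma neumann_offdiag_nonneg {i k : Fin n} (h : k ≠ i) : 0 ≤ neumannLaplacian n i k := by
  have hv : (i : ℕ) ≠ (k : ℕ) := fun hc => h (Fin.ext hc.symm)
  simp only [neumannLaplacian, Matrix.of_apply]
  split_ifs with h1 <;> first | exact absurd h1 hv | norm_num

lemma sum_ite_le {w : ℝ} (hw : 0 ≤ w) (p : Fin n → Prop) [DecidablePred p]
    (hp : ∀ a b, p a → p b → a = b) :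
    ∑ k : Fin n, (if p k then w else 0) ≤ w := by
  rw [← Finset.sum_filter]
  rw [Finset.sum_const, nsmul_eq_mul]
  have hcard : ((Finset.univ.filter p).card : ℝ) ≤ 1 := by
    have : (Finset.univ.filter p).card ≤ 1 := Finset.card_le_one.mpr
      (fun a ha b hb => hp a b (Finset.mem_filter.mp ha).2 (Finset.mem_filter.mp hb).2)
    exact_mod_cast this
  nlinarith

lemma neumann_row_sum (hn : 2 ≤ n) (i : Fin n) :
    ∑ k ∈ Finset.univ.erase i, neumannLaplacian n i k ≤ 2 := by
  have hlt : ∀ k : Fin n, (k : ℕ) < n := fun k => k.isLt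
  rcases eq_or_ne (i : ℕ) 0 with hi | hi0
  · -- first row
    have hb : ∀ k ∈ Finset.univ.erase i, neumannLaplacian n i k ≤
        (if (k : ℕ) = 1 then (2 : ℝ) else 0) := by
      intro k hk
      have hki : k ≠ i := (Finset.mem_erase.mp hk).1
      have hv : (i : ℕ) ≠ (k : ℕ) := fun hc => hki (Fin.ext hc.symm)
      simp only [neumannLaplacian, Matrix.of_apply]
      split_ifs with h1 h2 h3 h4 h5 h6 <;>
        first
        | exact absurd h1 hv
        | (exfalso; omega)
        | norm_num
    calc ∑ k ∈ Finset.univ.erase i, neumannLaplacian n i k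
        ≤ ∑ k ∈ Finset.univ.erase i, (if (k : ℕ) = 1 then (2 : ℝ) else 0) :=
          Finset.sum_le_sum hb
      _ ≤ ∑ k : Fin n, (if (k : ℕ) = 1 then (2 : ℝ) else 0) :=
          Finset.sum_le_sum_of_subset_of_nonneg (Finset.erase_subset _ _)
            (fun k _ _ => by positivity)
      _ ≤ 2 := sum_ite_le (by norm_num) _ (fun a b ha hb => Fin.ext (ha.trans hb.symm))
  · rcases eq_or_ne (i : ℕ) (n - 1) with hi | hi1
    · -- last row
      have hb : ∀ k ∈ Finset.univ.erase i, neumannLaplacian n i k ≤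
          (if (k : ℕ) + 1 = (i : ℕ) then (2 : ℝ) else 0) := by
        intro k hk
        have hki : k ≠ i := (Finset.mem_erase.mp hk).1
        have hv : (i : ℕ) ≠ (k : ℕ) := fun hc => hki (Fin.ext hc.symm)
        have hkn := hlt k
        simp only [neumannLaplacian, Matrix.of_apply]
        split_ifs with h1 h2 h3 h4 h5 h6 <;>
          first
          | exact absurd h1 hv
          | (exfalso; omega)
          | norm_num
      calc ∑ k ∈ Finset.univ.erase i, neumannLaplacian n i k
          ≤ ∑ k ∈ Finset.univ.erase i, (if (k : ℕ) + 1 = (i : ℕ) then (2 : ℝ) else 0) :=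
            Finset.sum_le_sum hb
        _ ≤ ∑ k : Fin n, (if (k : ℕ) + 1 = (i : ℕ) then (2 : ℝ) else 0) :=
            Finset.sum_le_sum_of_subset_of_nonneg (Finset.erase_subset _ _)
              (fun k _ _ => by positivity)
        _ ≤ 2 := sum_ite_le (by norm_num) _ (fun a b ha hb => Fin.ext (by omega))
    · -- interior row
      have hb : ∀ k ∈ Finset.univ.erase i, neumannLaplacian n i k ≤
          ((if (k : ℕ) + 1 = (i : ℕ) then (1 : ℝ) else 0) +
           (if (k : ℕ) = (i : ℕ) + 1 then (1 : ℝ) else 0)) := by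
        intro k hk
        have hki : k ≠ i := (Finset.mem_erase.mp hk).1
        have hv : (i : ℕ) ≠ (k : ℕ) := fun hc => hki (Fin.ext hc.symm)
        have hkn := hlt k
        simp only [neumannLaplacian, Matrix.of_apply]
        split_ifs with h1 h2 h3 h4 h5 h6 h7 h8 h9 <;>
          first
          | exact absurd h1 hv
          | (exfalso; omega)
          | norm_num
      calc ∑ k ∈ Finset.univ.erase i, neumannLaplacian n i k
          ≤ ∑ k ∈ Finset.univ.erase i,
              ((if (k : ℕ) + 1 = (i : ℕ) then (1 : ℝ) else 0) +
               (if (k : ℕ) = (i : ℕ) + 1 then (1 : ℝ) else 0)) := Finset.sum_le_sum hb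
        _ ≤ ∑ k : Fin n,
              ((if (k : ℕ) + 1 = (i : ℕ) then (1 : ℝ) else 0) +
               (if (k : ℕ) = (i : ℕ) + 1 then (1 : ℝ) else 0)) :=
            Finset.sum_le_sum_of_subset_of_nonneg (Finset.erase_subset _ _)
              (fun k _ _ => by positivity)
        _ = (∑ k : Fin n, (if (k : ℕ) + 1 = (i : ℕ) then (1 : ℝ) else 0)) +
              ∑ k : Fin n, (if (k : ℕ) = (i : ℕ) + 1 then (1 : ℝ) else 0) :=
            Finset.sum_add_distrib
        _ ≤ 1 + 1 := add_le_add
              (sum_ite_le (by norm_num) _ (fun a b ha hb => Fin.ext (by omega)))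
              (sum_ite_le (by norm_num) _ (fun a b ha hb => Fin.ext (ha.trans hb.symm)))
        _ = 2 := by norm_num

end laplacian
section stability

lemma stability {nξ nx : ℕ} (hnξ : 2 ≤ nξ) {γ τ μ : ℝ} (hγτ : 0 ≤ γ * τ) (hμ : 0 ≤ μ)
    (A : Matrix (Fin nξ) (Fin nξ) ℝ)
    (hA : A = (1 + γ * τ) • (1 : Matrix (Fin nξ) (Fin nξ) ℝ) - μ • neumannLaplacian nξ)
    (E : Matrix (Fin nξ) (Fin nx) ℝ) :
    (1 + γ * τ) * matInfNorm E ≤ matInfNorm (A * E) := by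
  have hne : Nonempty (Fin nξ) := ⟨⟨0, by omega⟩⟩
  set S : Fin nξ → ℝ := fun i => ∑ j, |E i j| with hS
  obtain ⟨i0, hi0⟩ : ∃ i0, ∀ i, S i ≤ S i0 := Finite.exists_max S
  have hS0 : 0 ≤ S i0 := Finset.sum_nonneg fun j _ => abs_nonneg _
  have hEnorm : matInfNorm E ≤ S i0 := ciSup_le hi0
  have hAE : A * E = (1 + γ * τ) • E - μ • (neumannLaplacian nξ * E) := by
    rw [hA, Matrix.sub_mul, Matrix.smul_mul, Matrix.smul_mul, Matrix.one_mul]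
  -- entrywise rewriting on row i0
  set T : Fin nx → ℝ := fun j => ∑ k ∈ Finset.univ.erase i0, neumannLaplacian nξ i0 k * E k j
    with hT
  have hentry : ∀ j, (A * E) i0 j = (1 + γ * τ + 2 * μ) * E i0 j - μ * T j := by
    intro j
    rw [hAE]
    simp only [Matrix.sub_apply, Matrix.smul_apply, Matrix.mul_apply, smul_eq_mul, hT]
    rw [← Finset.add_sum_erase _ (fun k => neumannLaplacian nξ i0 k * E k j)
      (Finset.mem_univ i0), neumann_diag]
    ring
  have hrow : ∀ j, (1 + γ * τ + 2 * μ) * |E i0 j| - μ * |T j| ≤ |(A * E) i0 j| := by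
    intro j
    rw [hentry j]
    have h1 : |(1 + γ * τ + 2 * μ) * E i0 j| - |μ * T j| ≤
        |(1 + γ * τ + 2 * μ) * E i0 j - μ * T j| := abs_sub_abs_le_abs_sub _ _
    rw [abs_mul, abs_mul, abs_of_nonneg (by linarith : (0:ℝ) ≤ 1 + γ * τ + 2 * μ),
      abs_of_nonneg hμ] at h1
    exact h1
  have hTsum : ∑ j, |T j| ≤ 2 * S i0 := by
    have h1 : ∀ j, |T j| ≤ ∑ k ∈ Finset.univ.erase i0, neumannLaplacian nξ i0 k * |E k j| := by
      intro j
      calc |T j| ≤ ∑ k ∈ Finset.univ.erase i0, |neumannLaplacian nξ i0 k * E k j| :=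
            Finset.abs_sum_le_sum_abs _ _
        _ = ∑ k ∈ Finset.univ.erase i0, neumannLaplacian nξ i0 k * |E k j| :=
            Finset.sum_congr rfl fun k hk => by
              rw [abs_mul, abs_of_nonneg
                (neumann_offdiag_nonneg (Finset.mem_erase.mp hk).1)]
    calc ∑ j, |T j| ≤ ∑ j, ∑ k ∈ Finset.univ.erase i0, neumannLaplacian nξ i0 k * |E k j| :=
          Finset.sum_le_sum fun j _ => h1 j
      _ = ∑ k ∈ Finset.univ.erase i0, neumannLaplacian nξ i0 k * S k := by
          rw [Finset.sum_comm]
          exact Finset.sum_congr rfl fun k _ => by rw [← Finset.mul_sum]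
      _ ≤ ∑ k ∈ Finset.univ.erase i0, neumannLaplacian nξ i0 k * S i0 :=
          Finset.sum_le_sum fun k hk => mul_le_mul_of_nonneg_left (hi0 k)
            (neumann_offdiag_nonneg (Finset.mem_erase.mp hk).1)
      _ = (∑ k ∈ Finset.univ.erase i0, neumannLaplacian nξ i0 k) * S i0 := by
          rw [Finset.sum_mul]
      _ ≤ 2 * S i0 := mul_le_mul_of_nonneg_right (neumann_row_sum hnξ i0) hS0
  have hfinal : (1 + γ * τ) * S i0 ≤ ∑ j, |(A * E) i0 j| := by
    have := Finset.sum_le_sum (fun j (_ : j ∈ Finset.univ) => hrow j)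
    rw [Finset.sum_sub_distrib, ← Finset.mul_sum, ← Finset.mul_sum] at this
    have hSdef : ∑ j, |E i0 j| = S i0 := rfl
    rw [hSdef] at this
    nlinarith [hTsum]
  calc (1 + γ * τ) * matInfNorm E ≤ (1 + γ * τ) * S i0 :=
        mul_le_mul_of_nonneg_left hEnorm (by linarith)
    _ ≤ ∑ j, |(A * E) i0 j| := hfinal
    _ ≤ matInfNorm (A * E) := row_le_matInfNorm _ i0

end stability

/-- (Convergence of the IMEX scheme, case `ζ > γ`.)
`|Vⁿ - V*ⁿ|_∞ ≤ (ω/(ζ - γ)) exp((ζ - γ) T /(1 + γτ))` for `1 ≤ n ≤ n_t`,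
where `T = n_t τ`. -/
theorem IMEX_convergence_supercritical (nξ nx : ℕ) (hnξ : 2 ≤ nξ) (hnx : 1 ≤ nx)
    (γ ν τ hξ ζ ω : ℝ) (hγ : 0 < γ) (hν : 0 < ν) (hτ : 0 < τ) (hhξ : 0 < hξ)
    (hζ : 0 ≤ ζ) (hω : 0 ≤ ω)
    (A : Matrix (Fin nξ) (Fin nξ) ℝ)
    (hA : A = (1 + γ * τ) • (1 : Matrix (Fin nξ) (Fin nξ) ℝ)
            - (τ * ν / hξ ^ 2) • neumannLaplacian nξ)
    (N : Matrix (Fin nξ) (Fin nx) ℝ → Matrix (Fin nξ) (Fin nx) ℝ)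
    (hN : ∀ V U, matInfNorm (N V - N U) ≤ ζ * matInfNorm (V - U))
    (V Vs G R : ℕ → Matrix (Fin nξ) (Fin nx) ℝ)
    (h0 : V 0 = Vs 0)
    (hV : ∀ n : ℕ, A * V (n + 1) = V n + τ • N (V n) + τ • G n)
    (hVs : ∀ n : ℕ, A * Vs (n + 1) = Vs n + τ • N (Vs n) + τ • G n + τ • R n)
    (hR : ∀ n : ℕ, matInfNorm (R n) ≤ ω)
    (hζγ : γ < ζ) (nt : ℕ) (T : ℝ) (hT : T = nt * τ) :
    ∀ n : ℕ, 1 ≤ n → n ≤ nt →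
      matInfNorm (V n - Vs n) ≤ (ω / (ζ - γ)) * Real.exp ((ζ - γ) * T / (1 + γ * τ)) := by
  have hne : Nonempty (Fin nξ) := ⟨⟨0, by omega⟩⟩
  have hc : (0:ℝ) < 1 + γ * τ := by nlinarith
  have hζγ' : (0:ℝ) < ζ - γ := by linarith
  set e : ℕ → ℝ := fun n => matInfNorm (V n - Vs n) with he
  set α : ℝ := (1 + τ * ζ) / (1 + γ * τ) with hα
  have hα1 : 1 ≤ α := by
    rw [hα, le_div_iff₀ hc]
    nlinarith
  have hα0 : 0 ≤ α := by linarith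
  -- recursion
  have hrec : ∀ n, (1 + γ * τ) * e (n + 1) ≤ (1 + τ * ζ) * e n + τ * ω := by
    intro n
    have hkey : A * (V (n + 1) - Vs (n + 1)) =
        (V n - Vs n) + τ • (N (V n) - N (Vs n)) - τ • R n := by
      rw [Matrix.mul_sub, hV n, hVs n, smul_sub]
      abel
    have h1 : (1 + γ * τ) * e (n + 1) ≤ matInfNorm (A * (V (n + 1) - Vs (n + 1))) :=
      stability hnξ (by positivity) (by positivity) A hA _
    rw [hkey] at h1
    have h2 : matInfNorm ((V n - Vs n) + τ • (N (V n) - N (Vs n)) - τ • R n) ≤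
        (1 + τ * ζ) * e n + τ * ω := by
      have t1 := matInfNorm_sub_le ((V n - Vs n) + τ • (N (V n) - N (Vs n))) (τ • R n)
      have t2 := matInfNorm_add_le (V n - Vs n) (τ • (N (V n) - N (Vs n)))
      have t3 := matInfNorm_smul_le τ (N (V n) - N (Vs n))
      have t4 := matInfNorm_smul_le τ (R n)
      have t5 := hN (V n) (Vs n)
      have t6 := hR n
      have habs : |τ| = τ := abs_of_pos hτ
      rw [habs] at t3 t4
      have t7 : matInfNorm (τ • (N (V n) - N (Vs n))) ≤ τ * (ζ * e n) :=
        t3.trans (mul_le_mul_of_nonneg_left t5 hτ.le)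
      have t8 : matInfNorm (τ • R n) ≤ τ * ω :=
        t4.trans (mul_le_mul_of_nonneg_left t6 hτ.le)
      have := t1.trans (add_le_add (t2.trans (add_le_add_right t7 _)) t8)
      calc matInfNorm ((V n - Vs n) + τ • (N (V n) - N (Vs n)) - τ • R n)
          ≤ (e n + τ * (ζ * e n)) + τ * ω := by
            refine t1.trans (add_le_add ?_ t8)
            exact t2.trans (add_le_add_right t7 _)
        _ = (1 + τ * ζ) * e n + τ * ω := by ring
    exact h1.trans h2
  -- induction bound
  have hbound : ∀ n, e n ≤ ω / (ζ - γ) * (α ^ n - 1) := by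
    intro n
    induction n with
    | zero =>
      have : e 0 = 0 := by
        simp only [he, h0, sub_self]
        exact matInfNorm_zero
      rw [this]
      simp
    | succ n ih =>
      have h1 := hrec n
      have h2 : (1 + τ * ζ) * e n ≤ (1 + τ * ζ) * (ω / (ζ - γ) * (α ^ n - 1)) :=
        mul_le_mul_of_nonneg_left ih (by nlinarith)
      have h3 : (1 + γ * τ) * e (n + 1) ≤
          (1 + τ * ζ) * (ω / (ζ - γ) * (α ^ n - 1)) + τ * ω := by linarith
      rw [← le_div_iff₀' hc] at h3
      refine h3.trans (le_of_eq ?_)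
      have hαc : α * (1 + γ * τ) = 1 + τ * ζ := by rw [hα]; exact div_mul_cancel₀ _ hc.ne'
      have hcz : ω / (ζ - γ) * (ζ - γ) = ω := div_mul_cancel₀ ω hζγ'.ne'
      rw [div_eq_iff hc.ne', pow_succ]
      linear_combination (-(ω / (ζ - γ)) * α ^ n) * hαc - τ * hcz
  -- final estimate
  intro n _ hn2
  have h1 : e n ≤ ω / (ζ - γ) * (α ^ n - 1) := hbound n
  have hcoef : 0 ≤ ω / (ζ - γ) := by positivity
  have h2 : α ^ n - 1 ≤ α ^ nt := by
    have : α ^ n ≤ α ^ nt := pow_le_pow_right₀ hα1 hn2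
    linarith
  have h3 : α ^ nt ≤ Real.exp ((ζ - γ) * T / (1 + γ * τ)) := by
    have hαe : α ≤ Real.exp (α - 1) := by
      have := Real.add_one_le_exp (α - 1)
      linarith
    have h4 : α ^ nt ≤ Real.exp (α - 1) ^ nt := pow_le_pow_left₀ hα0 hαe nt
    have h5 : Real.exp (α - 1) ^ nt = Real.exp ((nt : ℝ) * (α - 1)) := by
      rw [← Real.exp_nat_mul]
    have h6 : (nt : ℝ) * (α - 1) = (ζ - γ) * T / (1 + γ * τ) := by
      rw [hT, hα]
      field_simp
      ring
    rw [h5, h6] at h4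
    exact h4
  calc e n ≤ ω / (ζ - γ) * (α ^ n - 1) := h1
    _ ≤ ω / (ζ - γ) * (α ^ nt) := mul_le_mul_of_nonneg_left h2 hcoef
    _ ≤ ω / (ζ - γ) * Real.exp ((ζ - γ) * T / (1 + γ * τ)) :=
        mul_le_mul_of_nonneg_left h3 hcoef
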